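/- The set of points of the form μ·v, where μ > 0 and v lies in the convex hull of the curve {(exp(x), 1, x) : x ∈ ℝ} ⊆ ℝ³, equals the set {(x₁,x₂,x₃) ∈ ℝ³ : x₂ > 0 and x₁ ≥ x₂·exp(x₃/x₂)}. -/

import Mathlib

open Real

/-- The curve `{(exp x, 1, x) : x ∈ ℝ} ⊆ ℝ³`. -/
def expCurve : Set (Fin 3 → ℝ) := Set.range fun x : ℝ => ![Real.exp x, 1, x]

lemma hull_subset_aux : convexHull ℝ expCurve ⊆
    {w : Fin 3 → ℝ | w 1 = 1 ∧ Real.exp (w 2) ≤ w 0} := by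
  apply convexHull_min
  · rintro _ ⟨x, rfl⟩
    constructor <;> simp
  · intro x hx y hy a b ha hb hab
    obtain ⟨hx1, hx2⟩ := hx
    obtain ⟨hy1, hy2⟩ := hy
    constructor
    · simp only [Pi.add_apply, Pi.smul_apply, smul_eq_mul, hx1, hy1]
      linarith
    · simp only [Pi.add_apply, Pi.smul_apply, smul_eq_mul]
      calc Real.exp (a * x 2 + b * y 2) ≤ a * Real.exp (x 2) + b * Real.exp (y 2) :=
            convexOn_exp.2 trivial trivial ha hb hab
        _ ≤ a * x 0 + b * y 0 := by nlinarith [Real.exp_pos (x 2), Real.exp_pos (y 2)]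

lemma mem_hull_aux (a t : ℝ) (h : Real.exp t ≤ a) : ![a, 1, t] ∈ convexHull ℝ expCurve := by
  set r := a / Real.exp t with hr
  have hept : (0:ℝ) < Real.exp t := Real.exp_pos t
  have hr1 : 1 ≤ r := (one_le_div hept).2 h
  set b := Real.sqrt (r ^ 2 - 1) with hbdef
  have hb2 : b ^ 2 = r ^ 2 - 1 := Real.sq_sqrt (by nlinarith)
  have hbnn : 0 ≤ b := Real.sqrt_nonneg _
  have hrb : 0 < r + b := by linarith
  set c := Real.log (r + b) with hc
  have hec : Real.exp c = r + b := Real.exp_log hrb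
  have hmul : (r + b) * (r - b) = 1 := by nlinarith
  have hecn : Real.exp (-c) = r - b := by
    rw [Real.exp_neg, hec, inv_eq_of_mul_eq_one_right hmul]
  have h1 : ![Real.exp (t - c), 1, t - c] ∈ convexHull ℝ expCurve :=
    subset_convexHull ℝ _ ⟨t - c, rfl⟩
  have h2 : ![Real.exp (t + c), 1, t + c] ∈ convexHull ℝ expCurve :=
    subset_convexHull ℝ _ ⟨t + c, rfl⟩
  have key := (convex_convexHull ℝ expCurve) h1 h2
    (by norm_num : (0:ℝ) ≤ 1/2) (by norm_num : (0:ℝ) ≤ 1/2) (by norm_num)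
  have heq : ![a, 1, t] =
      (1/2 : ℝ) • ![Real.exp (t - c), 1, t - c] + (1/2 : ℝ) • ![Real.exp (t + c), 1, t + c] := by
    have ha' : a = r * Real.exp t := by rw [hr, div_mul_cancel₀ _ hept.ne']
    funext i
    fin_cases i <;>
      simp [Pi.add_apply, Pi.smul_apply, Real.exp_sub, Real.exp_add]
    · rw [ha']
      have : Real.exp t / Real.exp c = Real.exp t * (r - b) := by
        rw [div_eq_mul_inv, hec, inv_eq_of_mul_eq_one_right hmul]
      rw [this, hec]
      ring
    · ring
    · ring
  rw [heq]
  exact key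

/-- The set of positive multiples of points of the convex hull of the curve
`{(exp x, 1, x) : x ∈ ℝ}` equals `{(x₁,x₂,x₃) : x₂ > 0, x₁ ≥ x₂·exp(x₃/x₂)}`. -/
theorem smul_convexHull_expCurve_eq :
    {p : Fin 3 → ℝ | ∃ μ : ℝ, 0 < μ ∧ ∃ v ∈ convexHull ℝ expCurve, p = μ • v} =
      {x : Fin 3 → ℝ | 0 < x 1 ∧ x 1 * Real.exp (x 2 / x 1) ≤ x 0} := by
  ext p
  constructor
  · rintro ⟨μ, hμ, v, hv, rfl⟩
    obtain ⟨hv1, hv2⟩ := hull_subset_aux hv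
    have hμne : μ ≠ 0 := ne_of_gt hμ
    constructor
    · simp [Pi.smul_apply, hv1, hμ]
    · simp only [Pi.smul_apply, smul_eq_mul, hv1, mul_one]
      have hd : μ * v 2 / μ = v 2 := by field_simp
      rw [hd]
      nlinarith
  · rintro ⟨h1, h2⟩
    refine ⟨p 1, h1, ![p 0 / p 1, 1, p 2 / p 1], ?_, ?_⟩
    · apply mem_hull_aux
      rw [le_div_iff₀ h1]
      nlinarith
    · funext i
      fin_cases i <;> simp [Pi.smul_apply] <;> field_simp
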